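/- Let n ≥ 1 be an integer and ν a real number that is not an integer. Then the function θ ↦ f_n(ν,θ) satisfies the differential equation sin θ · f″(θ) − 2(n−1) cos θ · f′(θ) − ((n−1)² − ν²) sin θ · f(θ) = 0 for all real θ, together with f_n(ν, π/2) = 1 and f_n(ν, 0) = 0. -/

import Mathlib

open Real

/-- The coefficient `a_k^n(ν)` from the paper (empty products equal 1). -/
noncomputable def lommelA (n k : ℕ) (ν : ℝ) : ℝ :=
  (2 : ℝ) ^ (1 - (n : ℤ)) *
    (∏ p ∈ Finset.Icc 1 (n - 1), (ν - n + 2 * (p : ℝ) + 1) / (ν - p + 1)) *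
    ∏ q ∈ Finset.Icc 1 k, (((n : ℝ) - q) * ((q : ℝ) + ν - n)) / ((q : ℝ) * ((q : ℝ) + ν))

/-- The function `f_n(ν,θ)` from the paper. -/
noncomputable def lommelF (n : ℕ) (ν θ : ℝ) : ℝ :=
  ∑ k ∈ Finset.range n, lommelA n k ν *
    Real.sin ((ν - n + 2 * (k : ℝ) + 1) * θ) /
      Real.sin ((ν - n + 2 * (k : ℝ) + 1) * π / 2)


open Finset

lemma lommelA_succ (n k : ℕ) (ν : ℝ) :
    lommelA n (k+1) ν = lommelA n k ν *
      ((((n : ℝ) - (k+1)) * (((k:ℝ)+1) + ν - n)) / ((((k:ℝ)+1)) * (((k:ℝ)+1) + ν))) := by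
  unfold lommelA
  rw [Finset.prod_Icc_succ_top (Nat.succ_le_succ (Nat.zero_le k))]
  push_cast
  ring

lemma lommelA_mul_succ (n k : ℕ) (ν : ℝ) (hν : ∀ m : ℤ, ν ≠ m) :
    (((k:ℝ)+1)) * (((k:ℝ)+1) + ν) * lommelA n (k+1) ν
      = ((n : ℝ) - ((k:ℝ)+1)) * (((k:ℝ)+1) + ν - n) * lommelA n k ν := by
  have h1 : ((k:ℝ)+1) ≠ 0 := by positivity
  have h2 : ((k:ℝ)+1) + ν ≠ 0 := by
    intro h; exact hν (-(k+1)) (by push_cast; linarith)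
  rw [lommelA_succ n k ν]
  field_simp

lemma lommelA_eq_zero (n k : ℕ) (ν : ℝ) (hn : 1 ≤ n) (hk : n ≤ k) :
    lommelA n k ν = 0 := by
  unfold lommelA
  rw [Finset.prod_eq_zero (Finset.mem_Icc.mpr ⟨hn, hk⟩) (by simp)]
  ring

lemma prodIcc (l : ℕ) (f : ℕ → ℝ) : ∏ p ∈ Icc 1 l, f p = ∏ j ∈ range l, f (j+1) := by
  rw [← Finset.Ico_add_one_right_eq_Icc, Finset.prod_Ico_eq_prod_range]
  simp [add_comm]

lemma Pstep (m : ℕ) (ν : ℝ) (hν : ∀ z : ℤ, ν ≠ (z:ℝ)) :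
    (ν - m - 1) * ∏ p ∈ Icc 1 (m+2), ((ν - ((m:ℕ)+2+1 : ℕ) + 2*(p:ℝ) + 1) / (ν - p + 1))
      = (ν + m + 2) * ∏ p ∈ Icc 1 m, ((ν - ((m:ℕ)+1 : ℕ) + 2*(p:ℝ) + 1) / (ν - p + 1)) := by
  rw [prodIcc, prodIcc]
  rw [Finset.prod_div_distrib, Finset.prod_div_distrib]
  have hnum : ∏ j ∈ range (m+2), (ν - ((m:ℕ)+2+1 : ℕ) + 2*((j+1 : ℕ):ℝ) + 1)
      = (∏ j ∈ range m, (ν - ((m:ℕ)+1 : ℕ) + 2*((j+1 : ℕ):ℝ) + 1)) * ((ν + m + 2) * (ν - m)) := by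
    rw [Finset.prod_range_succ', Finset.prod_range_succ]
    rw [Finset.prod_congr rfl (fun j _ => by push_cast; ring :
      ∀ j ∈ range m, (ν - ((m:ℕ)+2+1 : ℕ) + 2*((j+1+1 : ℕ):ℝ) + 1)
        = (ν - ((m:ℕ)+1 : ℕ) + 2*((j+1 : ℕ):ℝ) + 1))]
    push_cast; ring
  have hden : ∏ j ∈ range (m+2), (ν - ((j+1 : ℕ):ℝ) + 1)
      = (∏ j ∈ range m, (ν - ((j+1 : ℕ):ℝ) + 1)) * ((ν - m) * (ν - m - 1)) := by
    rw [Finset.prod_range_succ, Finset.prod_range_succ]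
    push_cast; ring
  rw [hnum, hden]
  have h0 : (ν - (m:ℝ)) ≠ 0 := fun h => hν m (by push_cast; linarith)
  have h1 : (ν - (m:ℝ) - 1) ≠ 0 := fun h => hν ((m:ℤ)+1) (by push_cast; linarith)
  have hD : (∏ j ∈ range m, (ν - ((j+1 : ℕ):ℝ) + 1)) ≠ 0 :=
    Finset.prod_ne_zero_iff.mpr (fun j _ => fun h => hν j (by push_cast at h ⊢; linarith))
  set N := ∏ j ∈ range m, (ν - ((m:ℕ)+1 : ℕ) + 2*((j+1 : ℕ):ℝ) + 1) with hN
  set D := ∏ j ∈ range m, (ν - ((j+1 : ℕ):ℝ) + 1) with hDD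
  field_simp

lemma lommelA_nstep (n k : ℕ) (ν : ℝ) (hν : ∀ z : ℤ, ν ≠ (z:ℝ)) (hn : 1 ≤ n) :
    4*((n:ℝ)-k)*((n:ℝ)+1-k)*((k:ℝ)+ν-(n:ℝ)-1)*((k:ℝ)+ν-(n:ℝ)) * lommelA (n+2) k ν
      = (n:ℝ)*((n:ℝ)+1)*(ν+(n:ℝ)+1)*(ν-(n:ℝ)-1) * lommelA n k ν := by
  induction k with
  | zero =>
    obtain ⟨m, rfl⟩ : ∃ m, n = m+1 := ⟨n-1, by omega⟩
    have hP := Pstep m ν hν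
    have h32 : m+1+2 = m+2+1 := by omega
    rw [h32]
    unfold lommelA
    rw [show m+2+1-1 = m+2 from by omega, show m+1-1 = m from by omega]
    rw [show Finset.Icc 1 0 = (∅ : Finset ℕ) from by simp]
    rw [Finset.prod_empty]
    have h2 : (2:ℝ) ^ (1 - ((m+2+1 : ℕ) : ℤ)) = (2:ℝ) ^ (1 - ((m+1 : ℕ) : ℤ)) / 4 := by
      rw [show (1 - ((m+2+1 : ℕ) : ℤ)) = (1 - ((m+1 : ℕ) : ℤ)) - 2 from by push_cast; ring]
      rw [zpow_sub₀ (by norm_num : (2:ℝ) ≠ 0)]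
      norm_num
    rw [h2]
    set w : ℝ := (2:ℝ) ^ (1 - ((m+1 : ℕ) : ℤ)) with hw
    push_cast
    push_cast at hP
    linear_combination (((m:ℝ)+1)*((m:ℝ)+2)*(ν-(m:ℝ)-2)*w) * hP
  | succ k ih =>
    have hD1 : ((k:ℝ)+1) ≠ 0 := by positivity
    have hD2 : ((k:ℝ)+1) + ν ≠ 0 := fun h => hν (-(k+1)) (by push_cast; linarith)
    have h1 := lommelA_mul_succ (n+2) k ν hν
    have h2 := lommelA_mul_succ n k ν hν
    refine mul_left_cancel₀ (mul_ne_zero hD1 hD2) ?_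
    push_cast at h1 h2 ih ⊢
    linear_combination (4*((n:ℝ)-k-1)*((n:ℝ)-k)*((k:ℝ)+ν-n)*((k:ℝ)+ν-n+1)) * h1
      - ((n:ℝ)*((n:ℝ)+1)*(ν+(n:ℝ)+1)*(ν-(n:ℝ)-1)) * h2
      + (((n:ℝ)-k-1)*((k:ℝ)+1+ν-n)) * ih

lemma sumA (ν : ℝ) (hν : ∀ z : ℤ, ν ≠ (z:ℝ)) :
    ∀ n : ℕ, 1 ≤ n → ∑ k ∈ range n, lommelA n k ν = 1 := by
  intro n
  induction n using Nat.strong_induction_on with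
  | _ n ih =>
    intro hn
    obtain (_|_|_|l) := n
    · omega
    · -- n = 1
      rw [Finset.sum_range_one]
      norm_num [lommelA, show Finset.Icc 1 0 = (∅ : Finset ℕ) from by simp]
    · -- n = 2
      have hν0 : ν ≠ 0 := fun h => hν 0 (by push_cast; linarith)
      have hν1 : ν + 1 ≠ 0 := fun h => hν (-1) (by push_cast; linarith)
      rw [Finset.sum_range_succ, Finset.sum_range_one, lommelA_succ]
      unfold lommelA
      rw [show (2:ℕ)-1 = 1 from rfl, show Finset.Icc 1 1 = {1} from rfl,
        Finset.prod_singleton, show Finset.Icc 1 0 = (∅ : Finset ℕ) from by simp,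
        Finset.prod_empty, show (2:ℝ)^(1-((2:ℕ):ℤ)) = 1/2 from by norm_num]
      push_cast
      have hν1' : 1 + ν ≠ 0 := fun h => hν1 (by linarith)
      have h2ν : ν * 2 + ν ^ 2 * 2 ≠ 0 := by
        have : ν * 2 + ν ^ 2 * 2 = 2*ν*(1+ν) := by ring
        rw [this]; exact mul_ne_zero (mul_ne_zero two_ne_zero hν0) hν1'
      field_simp [h2ν, hν0, hν1']
      ring
    · -- n = l+3
      have ihm : ∑ k ∈ range (l+1), lommelA (l+1) k ν = 1 := ih (l+1) (by omega) (by omega)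
      set α : ℝ := ν - 3*((l:ℝ)+1) - 2 with hα
      set β : ℝ := ((5*((l:ℝ)+1)+2)*(((l:ℝ)+1)+1) - ν*(3*((l:ℝ)+1)+2))/2 with hβ
      set μc : ℝ := ((l:ℝ)+1)*(((l:ℝ)+1)+1)*(ν+((l:ℝ)+1)+1)*(ν-((l:ℝ)+1)-1) with hμ
      set g : ℕ → ℝ := fun k =>
        2*(k:ℝ)*((k:ℝ)+ν)*((k:ℝ)^2 + α*(k:ℝ) + β) * lommelA (l+3) k ν with hg
      have key : ∀ k : ℕ, μc * (lommelA (l+3) k ν - lommelA (l+1) k ν) = g (k+1) - g k := by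
        intro k
        have h1 := lommelA_mul_succ (l+3) k ν hν
        have hns := lommelA_nstep (l+1) k ν hν (by omega)
        rw [show l+1+2 = l+3 from rfl] at hns
        simp only [hg, hμ, hα, hβ]
        push_cast at h1 hns ⊢
        linear_combination hns - (2*(((k:ℝ)+1)^2 + α*((k:ℝ)+1) + β)) * h1
      have hsum : μc * (∑ k ∈ range (l+3), lommelA (l+3) k ν
          - ∑ k ∈ range (l+3), lommelA (l+1) k ν) = 0 := by
        rw [← Finset.sum_sub_distrib, Finset.mul_sum]
        rw [Finset.sum_congr rfl (fun k _ => key k)]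
        rw [Finset.sum_range_sub g (l+3)]
        have hz1 : lommelA (l+3) (l+3) ν = 0 := lommelA_eq_zero _ _ _ (by omega) le_rfl
        simp [hg, hz1]
      have hμne : μc ≠ 0 := by
        have c1 : ((l:ℝ)+1) ≠ 0 := by positivity
        have c2 : (((l:ℝ)+1)+1) ≠ 0 := by positivity
        have c3 : (ν+((l:ℝ)+1)+1) ≠ 0 := fun h => hν (-(l+2)) (by push_cast; linarith)
        have c4 : (ν-((l:ℝ)+1)-1) ≠ 0 := fun h => hν (l+2) (by push_cast; linarith)
        exact mul_ne_zero (mul_ne_zero (mul_ne_zero c1 c2) c3) c4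
      have heq : ∑ k ∈ range (l+3), lommelA (l+3) k ν
          = ∑ k ∈ range (l+3), lommelA (l+1) k ν := by
        have := (mul_eq_zero.mp hsum).resolve_left hμne
        linarith [this]
      rw [heq, Finset.sum_range_succ, Finset.sum_range_succ,
        lommelA_eq_zero (l+1) (l+2) ν (by omega) (by omega),
        lommelA_eq_zero (l+1) (l+1) ν (by omega) le_rfl, ihm]
      norm_num

lemma Sne (n k : ℕ) (ν : ℝ) (hν : ∀ z : ℤ, ν ≠ (z:ℝ)) :
    Real.sin ((ν - n + 2 * (k : ℝ) + 1) * π / 2) ≠ 0 := by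
  intro h
  obtain ⟨j, hj⟩ := Real.sin_eq_zero_iff.mp h
  have h2 : (2*(j:ℝ)) * π = (ν - n + 2*(k:ℝ) + 1) * π := by linarith [hj]
  have h3 : (2*(j:ℝ)) = ν - n + 2*(k:ℝ) + 1 := mul_right_cancel₀ Real.pi_ne_zero h2
  exact hν (2*j + (n:ℤ) - 2*(k:ℤ) - 1) (by push_cast; linarith)

lemma Sflip (n k : ℕ) (ν : ℝ) :
    Real.sin ((ν - n + 2 * ((k:ℝ)+1) + 1) * π / 2)
      = - Real.sin ((ν - n + 2 * (k : ℝ) + 1) * π / 2) := by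
  rw [show (ν - n + 2 * ((k:ℝ)+1) + 1) * π / 2
      = (ν - n + 2 * (k:ℝ) + 1) * π / 2 + π from by ring, Real.sin_add_pi]

noncomputable def lommelD1 (n : ℕ) (ν θ : ℝ) : ℝ :=
  ∑ k ∈ Finset.range n, lommelA n k ν / Real.sin ((ν - n + 2 * (k : ℝ) + 1) * π / 2) *
    (Real.cos ((ν - n + 2 * (k : ℝ) + 1) * θ) * (ν - n + 2 * (k : ℝ) + 1))

noncomputable def lommelD2 (n : ℕ) (ν θ : ℝ) : ℝ :=
  ∑ k ∈ Finset.range n, lommelA n k ν / Real.sin ((ν - n + 2 * (k : ℝ) + 1) * π / 2) *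
    (-Real.sin ((ν - n + 2 * (k : ℝ) + 1) * θ) * (ν - n + 2 * (k : ℝ) + 1) * (ν - n + 2 * (k : ℝ) + 1))

lemma lommelF_eq (n : ℕ) (ν : ℝ) : lommelF n ν = fun θ =>
    ∑ k ∈ Finset.range n, lommelA n k ν / Real.sin ((ν - n + 2 * (k : ℝ) + 1) * π / 2) *
      Real.sin ((ν - n + 2 * (k : ℝ) + 1) * θ) := by
  funext θ
  exact Finset.sum_congr rfl (fun k _ => by rw [mul_div_right_comm])

lemma hasDeriv1 (n : ℕ) (ν θ : ℝ) : HasDerivAt (lommelF n ν) (lommelD1 n ν θ) θ := by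
  rw [lommelF_eq]
  apply HasDerivAt.fun_sum
  intro k _
  have h : HasDerivAt (fun θ : ℝ => (ν - n + 2 * (k : ℝ) + 1) * θ) (ν - n + 2 * (k : ℝ) + 1) θ := by
    simpa using (hasDerivAt_id θ).const_mul (ν - n + 2 * (k : ℝ) + 1)
  exact h.sin.const_mul _

lemma hasDeriv2 (n : ℕ) (ν θ : ℝ) : HasDerivAt (lommelD1 n ν) (lommelD2 n ν θ) θ := by
  apply HasDerivAt.fun_sum
  intro k _
  have h : HasDerivAt (fun θ : ℝ => (ν - n + 2 * (k : ℝ) + 1) * θ) (ν - n + 2 * (k : ℝ) + 1) θ := by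
    simpa using (hasDerivAt_id θ).const_mul (ν - n + 2 * (k : ℝ) + 1)
  exact ((h.cos.mul_const _).const_mul _)

lemma ode (m : ℕ) (ν : ℝ) (hν : ∀ z : ℤ, ν ≠ (z:ℝ)) (θ : ℝ) :
    Real.sin θ * lommelD2 (m+1) ν θ - 2*(((m:ℝ)+1)-1)*Real.cos θ * lommelD1 (m+1) ν θ
      - ((((m:ℝ)+1)-1)^2 - ν^2) * Real.sin θ * lommelF (m+1) ν θ = 0 := by
  set c : ℕ → ℝ := fun k => lommelA (m+1) k ν /
    Real.sin ((ν - ((m+1 : ℕ):ℝ) + 2 * (k : ℝ) + 1) * π / 2) with hc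
  set u : ℕ → ℝ := fun j => Real.cos ((ν - ((m+1 : ℕ):ℝ) + 2 * (j:ℝ)) * θ) with hu
  set E : ℕ → ℝ := fun k => -2 * c k * (k:ℝ) * ((k:ℝ) + ν) with hE
  set D : ℕ → ℝ := fun k => 2 * c k * ((m:ℝ) - k) * ((m:ℝ) - k - ν) with hD
  rw [lommelF_eq]
  unfold lommelD1 lommelD2
  rw [Finset.mul_sum, Finset.mul_sum, Finset.mul_sum, ← Finset.sum_sub_distrib,
    ← Finset.sum_sub_distrib]
  have hterm : ∀ k ∈ Finset.range (m+1),
      (Real.sin θ * (c k * (-Real.sin ((ν - ((m+1 : ℕ):ℝ) + 2 * (k : ℝ) + 1) * θ) * (ν - ((m+1 : ℕ):ℝ) + 2 * (k : ℝ) + 1) * (ν - ((m+1 : ℕ):ℝ) + 2 * (k : ℝ) + 1)))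
        - 2*(((m:ℝ)+1)-1)*Real.cos θ * (c k * (Real.cos ((ν - ((m+1 : ℕ):ℝ) + 2 * (k : ℝ) + 1) * θ) * (ν - ((m+1 : ℕ):ℝ) + 2 * (k : ℝ) + 1)))
        - ((((m:ℝ)+1)-1)^2 - ν^2) * Real.sin θ * (c k * Real.sin ((ν - ((m+1 : ℕ):ℝ) + 2 * (k : ℝ) + 1) * θ)))
      = E k * u k + D k * u (k+1) := by
    intro k _
    simp only [hE, hD, hu]
    push_cast
    rw [show (ν - ((m:ℝ)+1) + 2*(k:ℝ)) * θ = (ν - ((m:ℝ)+1) + 2*(k:ℝ) + 1) * θ - θ from by ring,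
      Real.cos_sub,
      show (ν - ((m:ℝ)+1) + 2*((k:ℝ)+1)) * θ = (ν - ((m:ℝ)+1) + 2*(k:ℝ) + 1) * θ + θ from by ring,
      Real.cos_add]
    ring
  rw [Finset.sum_congr rfl hterm]
  rw [Finset.sum_add_distrib, Finset.sum_range_succ', Finset.sum_range_succ]
  have hE0 : E 0 * u 0 = 0 := by simp [hE]
  have hDm : D m * u (m+1) = 0 := by simp [hD]
  rw [hE0, hDm, add_zero, add_zero, ← Finset.sum_add_distrib]
  apply Finset.sum_eq_zero
  intro k hk
  rw [← add_mul]
  have hkey : E (k+1) + D k = 0 := by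
    have h1 := lommelA_mul_succ (m+1) k ν hν
    have hS := Sflip (m+1) k ν
    have hSne := Sne (m+1) k ν hν
    simp only [hE, hD, hc]
    push_cast
    push_cast at hS
    rw [hS, div_neg]
    push_cast at h1 hSne
    field_simp [hSne]
    linear_combination 2*h1
  rw [hkey, zero_mul]



theorem stmt15 (n : ℕ) (hn : 1 ≤ n) (ν : ℝ) (hν : ∀ m : ℤ, ν ≠ m) :
    (∀ θ : ℝ,
      Real.sin θ * iteratedDeriv 2 (lommelF n ν) θ -
        2 * ((n : ℝ) - 1) * Real.cos θ * deriv (lommelF n ν) θ -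
        (((n : ℝ) - 1) ^ 2 - ν ^ 2) * Real.sin θ * lommelF n ν θ = 0) ∧
    lommelF n ν (π / 2) = 1 ∧ lommelF n ν 0 = 0 := by
  obtain ⟨m, rfl⟩ : ∃ m, n = m+1 := ⟨n-1, by omega⟩
  refine ⟨fun θ => ?_, ?_, ?_⟩
  · have hd : deriv (lommelF (m+1) ν) = lommelD1 (m+1) ν :=
      funext fun x => (hasDeriv1 (m+1) ν x).deriv
    have hd2 : iteratedDeriv 2 (lommelF (m+1) ν) = lommelD2 (m+1) ν := by
      rw [iteratedDeriv_succ, iteratedDeriv_one, hd]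
      exact funext fun x => (hasDeriv2 (m+1) ν x).deriv
    rw [hd, hd2]
    have h := ode m ν hν θ
    push_cast
    linear_combination h
  · unfold lommelF
    rw [Finset.sum_congr rfl (fun k (_ : k ∈ Finset.range (m+1)) => by
      rw [show (ν - ((m+1:ℕ):ℝ) + 2*(k:ℝ) + 1) * (π/2)
          = (ν - ((m+1:ℕ):ℝ) + 2*(k:ℝ) + 1) * π / 2 from by ring,
        mul_div_assoc, div_self (Sne (m+1) k ν hν), mul_one] :
      ∀ k ∈ Finset.range (m+1), lommelA (m+1) k ν *
        Real.sin ((ν - ((m+1:ℕ):ℝ) + 2*(k:ℝ) + 1) * (π/2)) /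
          Real.sin ((ν - ((m+1:ℕ):ℝ) + 2*(k:ℝ) + 1) * π / 2) = lommelA (m+1) k ν)]
    exact sumA ν hν (m+1) (by omega)
  · simp [lommelF]
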